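/- Let n ≥ 2 and let I_s : (−1,1) → ℝ be the function I_s(δ) = ∫₀¹ sin(2πw)(1 − δ sin(2πw))^{−3/2} dw. Suppose r₁, …, r_n : [0, T) → ℝ and h₁, …, h_n : [0, T) → ℝ are differentiable with r_i(t) > 0 for all i and t, and suppose the radii satisfy r_i'(t) = −2π Σ_{j ≠ i} r_j z_{ij} I_s(δ_{ij}) / (r_i² + r_j² + z_{ij}²)^{3/2}, where z_{ij} = h_i − h_j and δ_{ij} = 2 r_i r_j / (r_i² + r_j² + z_{ij}²). Then t ↦ Σ_{i=1}^n r_i(t)² is constant on [0, T); i.e. the flow of vertically concentric circles preserves the total enclosed area Σ_{i=1}^n π r_i(t)². -/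

import Mathlib

noncomputable section

open Real

/-- The parametric integral `I_s(δ)`. -/
def Is (δ : ℝ) : ℝ :=
  ∫ w in (0:ℝ)..1, Real.sin (2 * π * w) / (1 - δ * Real.sin (2 * π * w)) ^ ((3:ℝ)/2)

theorem n_circles_area_conservation
    (n : ℕ) (hn : 2 ≤ n) (T : ℝ) (r h : Fin n → ℝ → ℝ)
    (hrpos : ∀ i : Fin n, ∀ t ∈ Set.Ico (0:ℝ) T, 0 < r i t)
    (hr : ∀ i : Fin n, ∀ t ∈ Set.Ico (0:ℝ) T,
      HasDerivWithinAt (r i)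
        (-(2 * π) * ∑ j ∈ Finset.univ.erase i,
          r j t * (h i t - h j t)
            * Is (2 * r i t * r j t / (r i t ^ 2 + r j t ^ 2 + (h i t - h j t) ^ 2))
            / (r i t ^ 2 + r j t ^ 2 + (h i t - h j t) ^ 2) ^ ((3:ℝ)/2))
        (Set.Ico (0:ℝ) T) t)
    (hh : ∀ i : Fin n, ∀ t ∈ Set.Ico (0:ℝ) T,
      DifferentiableWithinAt ℝ (h i) (Set.Ico (0:ℝ) T) t) :
    ∀ t ∈ Set.Ico (0:ℝ) T,
      (∑ i : Fin n, r i t ^ 2) = ∑ i : Fin n, r i 0 ^ 2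
      ∧ (∑ i : Fin n, π * r i t ^ 2) = ∑ i : Fin n, π * r i 0 ^ 2 := by
  intro t ht
  have hT : (0:ℝ) < T := lt_of_le_of_lt ht.1 ht.2
  set s : Set ℝ := Set.Ico (0:ℝ) T with hs
  -- the total square-sum has zero derivative on s
  have key : ∀ u ∈ s, HasDerivWithinAt (fun τ => ∑ i : Fin n, r i τ ^ 2) 0 s u := by
    intro u hu
    set F : Fin n → Fin n → ℝ := fun i j =>
      r j u * (h i u - h j u)
        * Is (2 * r i u * r j u / (r i u ^ 2 + r j u ^ 2 + (h i u - h j u) ^ 2))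
        / (r i u ^ 2 + r j u ^ 2 + (h i u - h j u) ^ 2) ^ ((3:ℝ)/2) with hF
    have hderiv : HasDerivWithinAt (fun τ => ∑ i : Fin n, r i τ ^ 2)
        (∑ i : Fin n, (2:ℕ) * r i u ^ (2 - 1) * (-(2 * π) * ∑ j ∈ Finset.univ.erase i, F i j))
        s u := HasDerivWithinAt.fun_sum (fun i _ => (hr i u hu).pow 2)
    have hFii : ∀ i : Fin n, F i i = 0 := by
      intro i; simp [hF]
    set G : Fin n → Fin n → ℝ := fun i j => r i u * F i j with hG
    have anti : ∀ i j : Fin n, G i j = -G j i := by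
      intro i j
      simp only [hG, hF]
      rw [show (r i u ^ 2 + r j u ^ 2 + (h i u - h j u) ^ 2)
            = (r j u ^ 2 + r i u ^ 2 + (h j u - h i u) ^ 2) from by ring,
          show 2 * r i u * r j u / (r j u ^ 2 + r i u ^ 2 + (h j u - h i u) ^ 2)
            = 2 * r j u * r i u / (r j u ^ 2 + r i u ^ 2 + (h j u - h i u) ^ 2) from by ring]
      ring
    have hGsum : (∑ i : Fin n, ∑ j : Fin n, G i j) = 0 := by
      have h1 : (∑ i : Fin n, ∑ j : Fin n, G i j) = ∑ j : Fin n, ∑ i : Fin n, G i j :=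
        Finset.sum_comm
      have h2 : (∑ j : Fin n, ∑ i : Fin n, G i j)
          = -∑ j : Fin n, ∑ i : Fin n, G j i := by
        rw [← Finset.sum_neg_distrib]
        refine Finset.sum_congr rfl fun j _ => ?_
        rw [← Finset.sum_neg_distrib]
        exact Finset.sum_congr rfl fun i _ => anti i j
      have h3 : (∑ j : Fin n, ∑ i : Fin n, G j i) = ∑ i : Fin n, ∑ j : Fin n, G i j := rfl
      rw [h3] at h2
      rw [h1] at *
      linarith [h2]
    have hzero : (∑ i : Fin n, ((2:ℕ):ℝ) * r i u ^ (2 - 1)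
        * (-(2 * π) * ∑ j ∈ Finset.univ.erase i, F i j)) = 0 := by
      have : (∑ i : Fin n, ((2:ℕ):ℝ) * r i u ^ (2 - 1)
          * (-(2 * π) * ∑ j ∈ Finset.univ.erase i, F i j))
          = ∑ i : Fin n, ∑ j : Fin n, (-(4 * π)) * G i j := by
        refine Finset.sum_congr rfl fun i _ => ?_
        rw [Finset.sum_erase _ (hFii i), Finset.mul_sum, Finset.mul_sum]
        refine Finset.sum_congr rfl fun j _ => ?_
        simp only [hG]
        push_cast
        ring
      rw [this]
      simp only [← Finset.mul_sum]
      rw [hGsum, mul_zero]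
    rw [hzero] at hderiv
    exact hderiv
  have hdiff : DifferentiableOn ℝ (fun τ => ∑ i : Fin n, r i τ ^ 2) s :=
    fun u hu => (key u hu).differentiableWithinAt
  have hfd : ∀ u ∈ s, fderivWithin ℝ (fun τ => ∑ i : Fin n, r i τ ^ 2) s u = 0 := by
    intro u hu
    have h1 := (key u hu).hasFDerivWithinAt.fderivWithin (uniqueDiffOn_Ico 0 T u hu)
    rw [h1]
    ext x
    simp
  have hconst : (∑ i : Fin n, r i t ^ 2) = ∑ i : Fin n, r i 0 ^ 2 :=
    (convex_Ico 0 T).is_const_of_fderivWithin_eq_zero hdiff hfd ht ⟨le_refl 0, hT⟩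
  refine ⟨hconst, ?_⟩
  rw [← Finset.mul_sum, ← Finset.mul_sum, hconst]
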